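/- Let P be an n×n real row-stochastic matrix, P* the Cesàro limit of P^m, and r ∈ ℝ^n. Then the Abel limit of the discounted value function equals the gain: lim_{γ → 1⁻} (1 − γ) (I − γP)⁻¹ r = P* r. -/

import Mathlib

open Finset Filter Topology Matrix

/-- A square real matrix is row-stochastic if all entries are nonnegative and
every row sums to 1. -/
def RowStochastic {n : ℕ} (P : Matrix (Fin n) (Fin n) ℝ) : Prop :=
  (∀ i j, 0 ≤ P i j) ∧ ∀ i, ∑ j, P i j = 1

section Aux

lemma weight_summable {γ : ℝ} (h : |γ| < 1) :
    Summable (fun m : ℕ => ((m : ℝ) + 1) * γ ^ m) := by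
  have hn : ‖γ‖ < 1 := by simpa [Real.norm_eq_abs] using h
  have h1 : Summable (fun m : ℕ => (m : ℝ) * γ ^ m) := by
    simpa using summable_pow_mul_geometric_of_norm_lt_one 1 hn
  have h2 : Summable (fun m : ℕ => γ ^ m) := summable_geometric_of_norm_lt_one hn
  simpa [add_mul, one_mul] using h1.add h2

lemma weight_tsum {γ : ℝ} (h0 : 0 ≤ γ) (h1 : γ < 1) :
    ∑' m : ℕ, ((m : ℝ) + 1) * γ ^ m = ((1 - γ) ^ 2)⁻¹ := by
  have hn : ‖γ‖ < 1 := by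
    rw [Real.norm_eq_abs, abs_of_nonneg h0]; exact h1
  have hs1 : Summable (fun m : ℕ => (m : ℝ) * γ ^ m) := by
    simpa using summable_pow_mul_geometric_of_norm_lt_one 1 hn
  have hs2 : Summable (fun m : ℕ => γ ^ m) := summable_geometric_of_norm_lt_one hn
  have e : ∀ m : ℕ, ((m : ℝ) + 1) * γ ^ m = (m : ℝ) * γ ^ m + γ ^ m := fun m => by ring
  rw [tsum_congr e, Summable.tsum_add hs1 hs2, tsum_coe_mul_geometric_of_norm_lt_one hn,
    tsum_geometric_of_norm_lt_one hn]
  have hne : (1 : ℝ) - γ ≠ 0 := by intro h; rw [sub_eq_zero] at h; exact absurd h.symm h1.ne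
  field_simp
  ring

variable {E : Type*} [NormedAddCommGroup E] [NormedSpace ℝ E]

/-- Regularity of the weighted (Abel-of-Cesàro) means. -/
lemma cesaro_to_abel [CompleteSpace E] {b : ℕ → E} {L : E} (hb : Tendsto b atTop (𝓝 L)) :
    Tendsto (fun γ : ℝ => ((1 - γ) ^ 2) • ∑' m : ℕ, (((m : ℝ) + 1) * γ ^ m) • b m)
      (𝓝[<] (1 : ℝ)) (𝓝 L) := by
  -- a uniform bound on `‖b m - L‖`
  have hc : Tendsto (fun m => ‖b m - L‖) atTop (𝓝 0) :=
    tendsto_iff_norm_sub_tendsto_zero.1 hb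
  obtain ⟨M0, hM0⟩ := hc.bddAbove_range
  set M : ℝ := max M0 1 with hMdef
  have hM1 : (0 : ℝ) < M := lt_of_lt_of_le one_pos (le_max_right _ _)
  have hM : ∀ m, ‖b m - L‖ ≤ M := fun m =>
    le_trans (hM0 ⟨m, rfl⟩) (le_max_left _ _)
  rw [Metric.tendsto_nhds]
  intro ε hε
  -- choose a cutoff
  obtain ⟨N, hN⟩ : ∃ N : ℕ, ∀ m, N ≤ m → ‖b m - L‖ ≤ ε / 2 := by
    have h := eventually_atTop.1
      (hc.eventually (eventually_le_nhds (show (0:ℝ) < ε / 2 by linarith)))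
    obtain ⟨N, hN⟩ := h
    exact ⟨N, fun m hm => hN m hm⟩
  set K : ℝ := (N : ℝ) * N * M with hK
  have hhead : ∀ᶠ γ : ℝ in 𝓝[<] 1, (1 - γ) ^ 2 * K < ε / 2 := by
    have ht : Tendsto (fun γ : ℝ => (1 - γ) ^ 2 * K) (𝓝[<] 1) (𝓝 0) := by
      have h1 : Tendsto (fun γ : ℝ => (1 - γ) ^ 2 * K) (𝓝 1) (𝓝 ((1 - 1) ^ 2 * K)) :=
        (((tendsto_const_nhds.sub tendsto_id).pow 2).mul_const K)
      simpa using h1.mono_left nhdsWithin_le_nhds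
    exact ht.eventually (gt_mem_nhds (by linarith))
  filter_upwards [Ioo_mem_nhdsLT_of_mem (show (1:ℝ) ∈ Set.Ioc (0:ℝ) 1 by constructor <;> norm_num),
    hhead] with γ hγ hγ2
  obtain ⟨hγ0, hγ1⟩ := hγ
  have habs : |γ| < 1 := abs_lt.2 ⟨by linarith, hγ1⟩
  have hsq : (0 : ℝ) < (1 - γ) ^ 2 := pow_pos (by linarith) 2
  set w : ℕ → ℝ := fun m => ((m : ℝ) + 1) * γ ^ m with hw
  have hw0 : ∀ m, 0 ≤ w m := fun m => by
    have : (0:ℝ) ≤ γ ^ m := pow_nonneg hγ0.le m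
    positivity
  have hws : Summable w := weight_summable habs
  have hwt : ∑' m, w m = ((1 - γ) ^ 2)⁻¹ := weight_tsum hγ0.le hγ1
  have hbnd : ∀ m, ‖b m‖ ≤ M + ‖L‖ := fun m => by
    calc ‖b m‖ = ‖b m - L + L‖ := by rw [sub_add_cancel]
    _ ≤ ‖b m - L‖ + ‖L‖ := norm_add_le _ _
    _ ≤ M + ‖L‖ := by have := hM m; linarith
  have S1 : Summable (fun m => w m • b m) := by
    refine Summable.of_norm_bounded (g := fun m => w m * (M + ‖L‖)) (hws.mul_right _) (fun m => ?_)
    rw [norm_smul, Real.norm_eq_abs, abs_of_nonneg (hw0 m)]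
    exact mul_le_mul_of_nonneg_left (hbnd m) (hw0 m)
  have S2 : Summable (fun m => w m • L) := hws.smul_const L
  have S4 : Summable (fun m => w m * ‖b m - L‖) := by
    refine Summable.of_nonneg_of_le (fun m => by positivity)
      (fun m => ?_) (hws.mul_right M)
    exact mul_le_mul_of_nonneg_left (hM m) (hw0 m)
  -- key rewriting of the difference
  have key : ((1 - γ) ^ 2) • (∑' m, w m • b m) - L
      = ((1 - γ) ^ 2) • ∑' m, w m • (b m - L) := by
    have e1 : ∑' m, w m • (b m - L) = (∑' m, w m • b m) - (∑' m, w m • L) := by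
      rw [← Summable.tsum_sub S1 S2]
      exact tsum_congr fun m => smul_sub _ _ _
    have e2 : ∑' m, w m • L = ((1 - γ) ^ 2)⁻¹ • L := by
      rw [Summable.tsum_smul_const hws, hwt]
    rw [e1, e2, smul_sub, smul_inv_smul₀ (ne_of_gt hsq)]
  rw [dist_eq_norm, key]
  have hnorm : ‖∑' m, w m • (b m - L)‖ ≤ ∑' m, w m * ‖b m - L‖ := by
    have := norm_tsum_le_tsum_norm (f := fun m => w m • (b m - L)) ?_
    · refine le_trans this (le_of_eq (tsum_congr fun m => ?_))
      rw [norm_smul, Real.norm_eq_abs, abs_of_nonneg (hw0 m)]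
    · refine S4.congr fun m => ?_
      rw [norm_smul, Real.norm_eq_abs, abs_of_nonneg (hw0 m)]
  -- split the sum
  have hsplit : ∑' m, w m * ‖b m - L‖
      = (∑ m ∈ Finset.range N, w m * ‖b m - L‖) + ∑' m, w (m + N) * ‖b (m + N) - L‖ :=
    ((Summable.sum_add_tsum_nat_add N S4).symm)
  have hterm : ∀ m ∈ Finset.range N, w m * ‖b m - L‖ ≤ (N : ℝ) * M := by
    intro m hm
    have hm' : (m : ℝ) + 1 ≤ N := by
      have := Finset.mem_range.1 hm
      exact_mod_cast Nat.succ_le_of_lt this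
    have hpow : γ ^ m ≤ 1 := pow_le_one₀ hγ0.le hγ1.le
    have hwm : w m ≤ (N : ℝ) := by
      have h1 : w m ≤ ((m : ℝ) + 1) * 1 :=
        mul_le_mul_of_nonneg_left hpow (by positivity)
      rw [mul_one] at h1
      exact h1.trans hm'
    exact mul_le_mul hwm (hM m) (norm_nonneg _) (Nat.cast_nonneg N)
  have hheadle : (∑ m ∈ Finset.range N, w m * ‖b m - L‖) ≤ K := by
    calc (∑ m ∈ Finset.range N, w m * ‖b m - L‖)
        ≤ ∑ _m ∈ Finset.range N, (N : ℝ) * M := Finset.sum_le_sum hterm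
    _ = K := by rw [Finset.sum_const, Finset.card_range, hK, nsmul_eq_mul]; ring
  have htailws : Summable (fun m => w (m + N)) := (summable_nat_add_iff N).2 hws
  have htails : Summable (fun m => w (m + N) * ‖b (m + N) - L‖) :=
    (summable_nat_add_iff N).2 S4
  have htaille : ∑' m, w (m + N) * ‖b (m + N) - L‖ ≤ ((1 - γ) ^ 2)⁻¹ * (ε / 2) := by
    calc ∑' m, w (m + N) * ‖b (m + N) - L‖
        ≤ ∑' m, w (m + N) * (ε / 2) := by
          refine Summable.tsum_le_tsum (fun m => ?_) htails (htailws.mul_right _)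
          exact mul_le_mul_of_nonneg_left (hN _ (Nat.le_add_left N m)) (hw0 _)
    _ = (∑' m, w (m + N)) * (ε / 2) := tsum_mul_right
    _ ≤ ((1 - γ) ^ 2)⁻¹ * (ε / 2) := by
        refine mul_le_mul_of_nonneg_right ?_ (by positivity)
        have := Summable.sum_add_tsum_nat_add N hws
        have hnn : 0 ≤ ∑ m ∈ Finset.range N, w m := Finset.sum_nonneg fun m _ => hw0 m
        rw [← hwt]
        linarith [this]
  calc ‖((1 - γ) ^ 2) • ∑' m, w m • (b m - L)‖
      = (1 - γ) ^ 2 * ‖∑' m, w m • (b m - L)‖ := by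
        rw [norm_smul, Real.norm_eq_abs, abs_of_pos hsq]
  _ ≤ (1 - γ) ^ 2 * (K + ((1 - γ) ^ 2)⁻¹ * (ε / 2)) := by
      refine mul_le_mul_of_nonneg_left (hnorm.trans ?_) hsq.le
      rw [hsplit]
      exact add_le_add hheadle htaille
  _ = (1 - γ) ^ 2 * K + (1 - γ) ^ 2 * (((1 - γ) ^ 2)⁻¹ * (ε / 2)) := by ring
  _ = (1 - γ) ^ 2 * K + ε / 2 := by
      rw [mul_inv_cancel_left₀ (ne_of_gt hsq)]
  _ < ε / 2 + ε / 2 := by linarith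
  _ = ε := by ring

/-- Abel summation for a bounded sequence. -/
lemma abel_identity [CompleteSpace E] (a : ℕ → E) (C : ℝ) (hC : ∀ k, ‖a k‖ ≤ C)
    {γ : ℝ} (h0 : 0 ≤ γ) (h1 : γ < 1) :
    ∑' k : ℕ, γ ^ k • a k
      = (1 - γ) • ∑' m : ℕ, γ ^ m • (∑ k ∈ Finset.range (m + 1), a k) := by
  have hn : ‖γ‖ < 1 := by rw [Real.norm_eq_abs, abs_of_nonneg h0]; exact h1
  have habs : |γ| < 1 := by rwa [Real.norm_eq_abs] at hn
  have hC0 : 0 ≤ C := (norm_nonneg _).trans (hC 0)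
  have hγpow : ∀ m : ℕ, (0:ℝ) ≤ γ ^ m := fun m => pow_nonneg h0 m
  set S : ℕ → E := fun m => ∑ k ∈ Finset.range m, a k with hS
  have hSle : ∀ m, ‖S m‖ ≤ (m : ℝ) * C := by
    intro m
    calc ‖S m‖ ≤ ∑ k ∈ Finset.range m, ‖a k‖ := norm_sum_le _ _
    _ ≤ ∑ _k ∈ Finset.range m, C := Finset.sum_le_sum fun k _ => hC k
    _ = (m : ℝ) * C := by rw [Finset.sum_const, Finset.card_range, nsmul_eq_mul]
  have hwt : Summable (fun m : ℕ => ((m : ℝ) + 1) * γ ^ m) := weight_summable habs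
  have hsum1 : Summable (fun m : ℕ => γ ^ m • a m) := by
    refine Summable.of_norm_bounded (g := fun m => γ ^ m * C)
      ((summable_geometric_of_norm_lt_one hn).mul_right C) (fun m => ?_)
    rw [norm_smul, Real.norm_eq_abs, abs_of_nonneg (hγpow m)]
    exact mul_le_mul_of_nonneg_left (hC m) (hγpow m)
  have hsumS : Summable (fun m : ℕ => γ ^ m • S (m + 1)) := by
    refine Summable.of_norm_bounded (g := fun m => (((m:ℝ) + 1) * γ ^ m) * C)
      (hwt.mul_right C) (fun m => ?_)
    rw [norm_smul, Real.norm_eq_abs, abs_of_nonneg (hγpow m)]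
    calc γ ^ m * ‖S (m + 1)‖ ≤ γ ^ m * (((m : ℝ) + 1) * C) := by
          refine mul_le_mul_of_nonneg_left ?_ (hγpow m)
          have := hSle (m + 1)
          push_cast at this ⊢
          linarith
    _ = (((m:ℝ) + 1) * γ ^ m) * C := by ring
  have hsum2 : Summable (fun m : ℕ => γ ^ m • S m - γ ^ (m + 1) • S (m + 1)) := by
    refine Summable.of_norm_bounded (g := fun m => (((m:ℝ) + 1) * γ ^ m) * (2 * C))
      (hwt.mul_right _) (fun m => ?_)
    have hA1 : ‖γ ^ m • S m‖ ≤ γ ^ m * ((m:ℝ) * C) := by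
      rw [norm_smul, Real.norm_eq_abs, abs_of_nonneg (hγpow m)]
      exact mul_le_mul_of_nonneg_left (hSle m) (hγpow m)
    have hA2 : ‖γ ^ (m+1) • S (m+1)‖ ≤ γ ^ m * (((m:ℝ) + 1) * C) := by
      rw [norm_smul, Real.norm_eq_abs, abs_of_nonneg (hγpow (m+1))]
      calc γ ^ (m+1) * ‖S (m+1)‖ ≤ γ ^ m * ‖S (m+1)‖ := by
            refine mul_le_mul_of_nonneg_right ?_ (norm_nonneg _)
            calc γ ^ (m+1) = γ ^ m * γ := pow_succ γ m
            _ ≤ γ ^ m * 1 := mul_le_mul_of_nonneg_left h1.le (hγpow m)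
            _ = γ ^ m := mul_one _
      _ ≤ γ ^ m * (((m:ℝ) + 1) * C) := by
            refine mul_le_mul_of_nonneg_left ?_ (hγpow m)
            have := hSle (m+1); push_cast at this ⊢; linarith
    calc ‖γ ^ m • S m - γ ^ (m + 1) • S (m + 1)‖
        ≤ ‖γ ^ m • S m‖ + ‖γ ^ (m+1) • S (m+1)‖ := norm_sub_le _ _
    _ ≤ γ ^ m * ((m:ℝ) * C) + γ ^ m * (((m:ℝ) + 1) * C) := add_le_add hA1 hA2
    _ ≤ (((m:ℝ) + 1) * γ ^ m) * (2 * C) := by nlinarith [hγpow m, Nat.cast_nonneg (α := ℝ) m]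
  have htel : ∑' m : ℕ, (γ ^ m • S m - γ ^ (m + 1) • S (m + 1)) = 0 := by
    have hps := hsum2.hasSum.tendsto_sum_nat
    have heq : ∀ M : ℕ, ∑ m ∈ Finset.range M, (γ ^ m • S m - γ ^ (m + 1) • S (m + 1))
        = γ ^ 0 • S 0 - γ ^ M • S M := Finset.sum_range_sub' (fun m => γ ^ m • S m)
    have hT0 : Tendsto (fun M : ℕ => γ ^ M • S M) atTop (𝓝 0) := by
      have hbM : ∀ M : ℕ, ‖γ ^ M • S M‖ ≤ ((M : ℝ) * γ ^ M) * C := by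
        intro M
        rw [norm_smul, Real.norm_eq_abs, abs_of_nonneg (hγpow M)]
        calc γ ^ M * ‖S M‖ ≤ γ ^ M * ((M:ℝ) * C) :=
              mul_le_mul_of_nonneg_left (hSle M) (hγpow M)
        _ = ((M : ℝ) * γ ^ M) * C := by ring
      have h3 : Tendsto (fun M : ℕ => (M : ℝ) * γ ^ M) atTop (𝓝 0) := by
        simpa using (summable_pow_mul_geometric_of_norm_lt_one 1 hn).tendsto_atTop_zero
      have h4 : Tendsto (fun M : ℕ => ((M : ℝ) * γ ^ M) * C) atTop (𝓝 0) := by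
        simpa using h3.mul_const C
      exact squeeze_zero_norm hbM h4
    have hlim : Tendsto (fun M : ℕ => ∑ m ∈ Finset.range M,
        (γ ^ m • S m - γ ^ (m + 1) • S (m + 1))) atTop (𝓝 0) := by
      simp only [heq]
      have hS0 : S 0 = 0 := by simp [hS]
      have : Tendsto (fun M : ℕ => γ ^ 0 • S 0 - γ ^ M • S M) atTop
          (𝓝 (γ ^ 0 • S 0 - 0)) := tendsto_const_nhds.sub hT0
      simpa [hS0] using this
    exact tendsto_nhds_unique hps hlim
  have hkey : ∀ m : ℕ, (1 - γ) • (γ ^ m • S (m + 1))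
      = γ ^ m • a m + (γ ^ m • S m - γ ^ (m + 1) • S (m + 1)) := by
    intro m
    have hsucc : S (m + 1) = S m + a m := Finset.sum_range_succ a m
    rw [hsucc, pow_succ]
    module
  calc ∑' k : ℕ, γ ^ k • a k
      = ∑' m : ℕ, (γ ^ m • a m + (γ ^ m • S m - γ ^ (m + 1) • S (m + 1))) := by
        rw [Summable.tsum_add hsum1 hsum2, htel, add_zero]
  _ = ∑' m : ℕ, (1 - γ) • (γ ^ m • S (m + 1)) := tsum_congr fun m => (hkey m).symm
  _ = (1 - γ) • ∑' m : ℕ, γ ^ m • S (m + 1) := Summable.tsum_const_smul _ hsumS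

end Aux

section MatrixFacts

variable {n : ℕ}

lemma sum_mulVec {ι : Type*} (s : Finset ι) (A : ι → Matrix (Fin n) (Fin n) ℝ)
    (r : Fin n → ℝ) :
    (∑ k ∈ s, A k).mulVec r = ∑ k ∈ s, (A k).mulVec r := by
  classical
  induction s using Finset.induction_on with
  | empty => simp [Matrix.zero_mulVec]
  | insert _ _ h ih => rw [Finset.sum_insert h, Finset.sum_insert h, Matrix.add_mulVec, ih]

lemma pow_mulVec_norm_le (P : Matrix (Fin n) (Fin n) ℝ) (hP : RowStochastic P)
    (r : Fin n → ℝ) (k : ℕ) : ‖(P ^ k).mulVec r‖ ≤ ‖r‖ := by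
  letI : NormedRing (Matrix (Fin n) (Fin n) ℝ) := Matrix.linftyOpNormedRing
  have hP1 : ‖P‖ ≤ 1 := by
    rw [Matrix.linfty_opNorm_def]
    have h1 : ∀ i : Fin n, (∑ j, ‖P i j‖₊) = 1 := by
      intro i
      apply NNReal.coe_injective
      push_cast
      calc (∑ j, ‖P i j‖ : ℝ) = ∑ j, P i j := by
            refine Finset.sum_congr rfl fun j _ => ?_
            rw [Real.norm_eq_abs, abs_of_nonneg (hP.1 i j)]
      _ = 1 := hP.2 i
    have h2 : (Finset.univ.sup fun i : Fin n => ∑ j, ‖P i j‖₊) ≤ 1 :=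
      Finset.sup_le fun i _ => le_of_eq (h1 i)
    exact_mod_cast h2
  have hpow : ∀ m : ℕ, ‖P ^ m‖ ≤ 1 := by
    intro m
    induction m with
    | zero =>
      rw [pow_zero, ← Matrix.diagonal_one, Matrix.linfty_opNorm_diagonal]
      refine (pi_norm_le_iff_of_nonneg zero_le_one).2 fun i => by simp
    | succ m ih =>
      rw [pow_succ]
      calc ‖P ^ m * P‖ ≤ ‖P ^ m‖ * ‖P‖ := norm_mul_le _ _
      _ ≤ 1 := by nlinarith [norm_nonneg (P ^ m), norm_nonneg P]
  calc ‖(P ^ k).mulVec r‖ ≤ ‖P ^ k‖ * ‖r‖ := Matrix.linfty_opNorm_mulVec _ _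
  _ ≤ 1 * ‖r‖ := mul_le_mul_of_nonneg_right (hpow k) (norm_nonneg r)
  _ = ‖r‖ := one_mul _

lemma inv_mulVec_eq (P : Matrix (Fin n) (Fin n) ℝ) (hP : RowStochastic P)
    (r : Fin n → ℝ) {γ : ℝ} (h0 : 0 ≤ γ) (h1 : γ < 1) :
    (1 - γ • P)⁻¹.mulVec r = ∑' k : ℕ, γ ^ k • ((P ^ k).mulVec r) := by
  letI : NormedRing (Matrix (Fin n) (Fin n) ℝ) := Matrix.linftyOpNormedRing
  letI : NormedAlgebra ℝ (Matrix (Fin n) (Fin n) ℝ) := Matrix.linftyOpNormedAlgebra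
  letI : CompleteSpace (Matrix (Fin n) (Fin n) ℝ) :=
    FiniteDimensional.complete ℝ _
  have hP1 : ‖P‖ ≤ 1 := by
    rw [Matrix.linfty_opNorm_def]
    have h1' : ∀ i : Fin n, (∑ j, ‖P i j‖₊) = 1 := by
      intro i
      apply NNReal.coe_injective
      push_cast
      calc (∑ j, ‖P i j‖ : ℝ) = ∑ j, P i j := by
            refine Finset.sum_congr rfl fun j _ => ?_
            rw [Real.norm_eq_abs, abs_of_nonneg (hP.1 i j)]
      _ = 1 := hP.2 i
    have h2 : (Finset.univ.sup fun i : Fin n => ∑ j, ‖P i j‖₊) ≤ 1 :=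
      Finset.sup_le fun i _ => le_of_eq (h1' i)
    exact_mod_cast h2
  have hγP : ‖γ • P‖ < 1 := by
    rw [norm_smul, Real.norm_eq_abs, abs_of_nonneg h0]
    calc γ * ‖P‖ ≤ γ * 1 := mul_le_mul_of_nonneg_left hP1 h0
    _ = γ := mul_one γ
    _ < 1 := h1
  have hinv : (1 - γ • P)⁻¹ = ∑' k : ℕ, (γ • P) ^ k := by
    rw [Matrix.nonsing_inv_eq_ringInverse, ← geom_series_eq_inverse _ hγP]
    rfl
  rw [hinv]
  have hsummable : Summable (fun k : ℕ => (γ • P) ^ k) :=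
    summable_geometric_of_norm_lt_one hγP
  let f : Matrix (Fin n) (Fin n) ℝ →ₗ[ℝ] (Fin n → ℝ) :=
    { toFun := fun M => M.mulVec r
      map_add' := fun A B => Matrix.add_mulVec A B r
      map_smul' := fun c A => Matrix.smul_mulVec c A r }
  have hf : Continuous f := f.continuous_of_finiteDimensional
  have hmap : HasSum (fun k : ℕ => f ((γ • P) ^ k)) (f (∑' k : ℕ, (γ • P) ^ k)) :=
    hsummable.hasSum.map f.toAddMonoidHom hf
  calc (∑' k : ℕ, (γ • P) ^ k).mulVec r = f (∑' k : ℕ, (γ • P) ^ k) := rfl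
  _ = ∑' k : ℕ, f ((γ • P) ^ k) := hmap.tsum_eq.symm
  _ = ∑' k : ℕ, γ ^ k • ((P ^ k).mulVec r) := by
      refine tsum_congr fun k => ?_
      show ((γ • P) ^ k).mulVec r = _
      rw [smul_pow, Matrix.smul_mulVec]

end MatrixFacts

/-- Abel limit: `(1 - γ)(I - γP)⁻¹ r → P* r` as `γ → 1⁻`, where `P*` is
the Cesàro limit of the powers of `P`. -/
theorem abel_limit_gain {n : ℕ} (P : Matrix (Fin n) (Fin n) ℝ)
    (hP : RowStochastic P) (r : Fin n → ℝ) (Pstar : Matrix (Fin n) (Fin n) ℝ)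
    (hPstar : Tendsto (fun m : ℕ => (m : ℝ)⁻¹ • ∑ k ∈ Finset.range m, P ^ k)
      atTop (𝓝 Pstar)) :
    Tendsto (fun γ : ℝ => (1 - γ) • (1 - γ • P)⁻¹.mulVec r)
      (𝓝[<] (1 : ℝ)) (𝓝 (Pstar.mulVec r)) := by
  set b : ℕ → (Fin n → ℝ) :=
    fun m => ((m : ℝ) + 1)⁻¹ • ∑ k ∈ Finset.range (m + 1), (P ^ k).mulVec r with hbdef
  have hb : Tendsto b atTop (𝓝 (Pstar.mulVec r)) := by
    have hcont : Continuous (fun M : Matrix (Fin n) (Fin n) ℝ => M.mulVec r) :=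
      continuous_id.matrix_mulVec continuous_const
    have h1 := (hcont.tendsto Pstar).comp (hPstar.comp (tendsto_add_atTop_nat 1))
    refine h1.congr fun m => ?_
    show (fun M : Matrix (Fin n) (Fin n) ℝ => M.mulVec r)
        (((m + 1 : ℕ) : ℝ)⁻¹ • ∑ k ∈ Finset.range (m + 1), P ^ k) = b m
    rw [hbdef]
    simp only []
    rw [Matrix.smul_mulVec, sum_mulVec]
    push_cast
    rfl
  refine (cesaro_to_abel hb).congr' ?_
  filter_upwards [Ioo_mem_nhdsLT_of_mem
    (show (1:ℝ) ∈ Set.Ioc (0:ℝ) 1 by constructor <;> norm_num)] with γ hγ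
  obtain ⟨hγ0, hγ1⟩ := hγ
  rw [inv_mulVec_eq P hP r hγ0.le hγ1,
    abel_identity (fun k => (P ^ k).mulVec r) ‖r‖ (pow_mulVec_norm_le P hP r) hγ0.le hγ1]
  have e : ∀ m : ℕ, (((m : ℝ) + 1) * γ ^ m) • b m
      = γ ^ m • ∑ k ∈ Finset.range (m + 1), (P ^ k).mulVec r := by
    intro m
    rw [hbdef]
    simp only []
    rw [smul_smul]
    congr 1
    have hne : ((m : ℝ) + 1) ≠ 0 := by positivity
    rw [mul_comm ((m : ℝ) + 1) (γ ^ m), mul_assoc, mul_inv_cancel₀ hne, mul_one]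
  rw [tsum_congr e, smul_smul, ← sq]
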